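/- Let 0 < a < b < c be real numbers and let k, l ∈ ℝ with k > 0 and l < 0. Then the square hyperbolae S_l(aI, bI) and S_k(bI, cI) are disjoint: there is no w ∈ H² with d(w,aI)² − d(w,bI)² = l and d(w,bI)² − d(w,cI)² = k. -/
import Mathlib

open UpperHalfPlane

noncomputable section

/-- The point of the upper half-plane with complex coordinate `a·i`, for `a > 0`. -/
def ptI (a : ℝ) (ha : 0 < a) : UpperHalfPlane := ⟨a * Complex.I, by simpa using ha⟩

@[simp] lemma ptI_re (a : ℝ) (ha : 0 < a) : (ptI a ha).re = 0 := by simp [ptI, UpperHalfPlane.re]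

@[simp] lemma ptI_im (a : ℝ) (ha : 0 < a) : (ptI a ha).im = a := by simp [ptI, UpperHalfPlane.im]

/-- For `0 < a < b < c`, `k > 0` and `l < 0`, the square hyperbolae `S_l(aI,bI)` and
`S_k(bI,cI)` are disjoint. -/
theorem squareHyperbolae_disjoint (a b c k l : ℝ) (ha : 0 < a) (hab : a < b)
    (hbc : b < c) (hk : 0 < k) (hl : l < 0) :
    ¬ ∃ w : UpperHalfPlane,
        dist w (ptI a ha) ^ 2 - dist w (ptI b (ha.trans hab)) ^ 2 = l ∧
        dist w (ptI b (ha.trans hab)) ^ 2 - dist w (ptI c ((ha.trans hab).trans hbc)) ^ 2 = k := by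
  rintro ⟨w, h1, h2⟩
  have hb : 0 < b := ha.trans hab
  have hc : 0 < c := hb.trans hbc
  -- distances
  have hda : dist w (ptI a ha) < dist w (ptI b hb) := by
    have h : dist w (ptI a ha) ^ 2 < dist w (ptI b hb) ^ 2 := by linarith
    exact lt_of_pow_lt_pow_left₀ 2 dist_nonneg h
  have hdc : dist w (ptI c hc) < dist w (ptI b hb) := by
    have h : dist w (ptI c hc) ^ 2 < dist w (ptI b hb) ^ 2 := by linarith
    exact lt_of_pow_lt_pow_left₀ 2 dist_nonneg h
  have hca : Real.cosh (dist w (ptI a ha)) < Real.cosh (dist w (ptI b hb)) :=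
    Real.cosh_strictMonoOn dist_nonneg dist_nonneg hda
  have hcc : Real.cosh (dist w (ptI c hc)) < Real.cosh (dist w (ptI b hb)) :=
    Real.cosh_strictMonoOn dist_nonneg dist_nonneg hdc
  rw [cosh_dist', cosh_dist'] at hca hcc
  simp only [ptI_re, ptI_im] at hca hcc
  set r := w.re
  have hy : 0 < w.im := w.im_pos
  set y := w.im
  rw [div_lt_div_iff₀ (by positivity) (by positivity)] at hca hcc
  have hs1 : (r - 0) ^ 2 + y ^ 2 < a * b := by nlinarith [mul_pos hy (sub_pos.2 hab)]
  have hs2 : b * c < (r - 0) ^ 2 + y ^ 2 := by nlinarith [mul_pos hy (sub_pos.2 hbc)]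
  nlinarith [mul_pos hb (sub_pos.2 (hab.trans hbc))]
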